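/- Let f : [0, 1] → ℝ, f(r) = r^{1/2}. For the best L²([0,1])-approximation error by polynomials of degree ≤ p, there exists c > 0 such that the error is at least c·p^{−2} for all p ≥ 1; in particular the error does not decay faster than algebraically of fixed order, regardless of p. -/

import Mathlib

open Real MeasureTheory intervalIntegral
open Polynomial

noncomputable def J (a b : ℕ) : ℝ := ∫ x in (0:ℝ)..1, x ^ a * (1 - x) ^ b

lemma contJ (a b : ℕ) : Continuous (fun x : ℝ => x ^ a * (1 - x) ^ b) := by continuity

lemma J_step (a b : ℕ) : ((a:ℝ)+1) * J a (b+1) = ((b:ℝ)+1) * J (a+1) b := by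
  have key : ∫ x in (0:ℝ)..1,
      (((a:ℝ)+1) * (x ^ a * (1-x)^(b+1)) - ((b:ℝ)+1) * (x ^ (a+1) * (1-x)^b)) = 0 := by
    have hd : ∀ x ∈ Set.uIcc (0:ℝ) 1, HasDerivAt (fun x : ℝ => x ^ (a+1) * (1-x)^(b+1))
        (((a:ℝ)+1) * (x ^ a * (1-x)^(b+1)) - ((b:ℝ)+1) * (x ^ (a+1) * (1-x)^b)) x := by
      intro x _
      have h1 : HasDerivAt (fun x : ℝ => x ^ (a+1)) (((a:ℝ)+1) * x ^ a) x := by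
        simpa using hasDerivAt_pow (a+1) x
      have hin : HasDerivAt (fun x : ℝ => 1 - x) (-1) x := by
        simpa using (hasDerivAt_id x).const_sub 1
      have h2 : HasDerivAt (fun x : ℝ => (1-x)^(b+1)) ((((b:ℝ)+1) * (1-x)^b) * (-1)) x := by
        have := (hasDerivAt_pow (b+1) (1-x)).comp x hin
        simpa [Function.comp_def] using this
      have := h1.fun_mul h2
      exact this.congr_deriv (by ring)
    have hint : IntervalIntegrable (fun x : ℝ =>
        (((a:ℝ)+1) * (x ^ a * (1-x)^(b+1)) - ((b:ℝ)+1) * (x ^ (a+1) * (1-x)^b)))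
        volume 0 1 := (Continuous.intervalIntegrable (by continuity) 0 1)
    rw [intervalIntegral.integral_eq_sub_of_hasDerivAt hd hint]
    simp
  rw [intervalIntegral.integral_sub, intervalIntegral.integral_const_mul,
      intervalIntegral.integral_const_mul] at key
  · unfold J; linarith
  · exact (Continuous.intervalIntegrable (by continuity) 0 1)
  · exact (Continuous.intervalIntegrable (by continuity) 0 1)

lemma J_eq (b a : ℕ) : J a b = (a.factorial : ℝ) * b.factorial / (a+b+1).factorial := by
  induction b generalizing a with
  | zero =>
    unfold J
    simp only [pow_zero, mul_one, integral_pow]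
    have e : ((a+0+1).factorial : ℝ) = ((a:ℝ)+1) * a.factorial := by
      rw [Nat.add_zero, Nat.factorial_succ]; push_cast; ring
    rw [e]
    have : (a.factorial : ℝ) ≠ 0 := by positivity
    field_simp
    simp
  | succ b ih =>
    have h := J_step a b
    have h2 := ih (a+1)
    have ha : ((a:ℝ)+1) ≠ 0 := by positivity
    have : J a (b+1) = ((b:ℝ)+1) * J (a+1) b / ((a:ℝ)+1) := by
      field_simp at h ⊢; linarith
    rw [this, h2]
    have e1 : ((a+1)+b+1) = (a+(b+1)+1) := by omega
    rw [e1]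
    have e2 : ((a+1 : ℕ).factorial : ℝ) = ((a:ℝ)+1) * a.factorial := by
      rw [Nat.factorial_succ]; push_cast; ring
    have e3 : ((b+1 : ℕ).factorial : ℝ) = ((b:ℝ)+1) * b.factorial := by
      rw [Nat.factorial_succ]; push_cast; ring
    rw [e2, e3]
    field_simp


theorem pint (P : ℝ[X]) : ∫ x in (0:ℝ)..1, (derivative P).eval x = P.eval 1 - P.eval 0 :=
  intervalIntegral.integral_eq_sub_of_hasDerivAt (fun x _ => P.hasDerivAt x)
    ((P.derivative.continuous).intervalIntegrable 0 1)

noncomputable def Fp (n : ℕ) : ℝ[X] := (X * (1 - X)) ^ n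
noncomputable def psi (n : ℕ) : ℝ[X] := derivative^[n] (Fp n)

lemma bdry {n k : ℕ} (hk : k < n) :
    (derivative^[k] (Fp n)).eval 0 = 0 ∧ (derivative^[k] (Fp n)).eval 1 = 0 := by
  obtain ⟨c, hc⟩ := pow_sub_dvd_iterate_derivative_pow (X * (1 - X) : ℝ[X]) n k
  rw [Fp, hc]
  have h : n - k ≠ 0 := by omega
  constructor <;> simp [eval_pow, zero_pow h]

lemma ibp (P Q : ℝ[X]) (h0 : Q.eval 0 = 0) (h1 : Q.eval 1 = 0) :
    ∫ x in (0:ℝ)..1, P.eval x * (derivative Q).eval x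
      = - ∫ x in (0:ℝ)..1, (derivative P).eval x * Q.eval x := by
  have key := pint (P * Q)
  rw [derivative_mul] at key
  have hsplit : ∫ x in (0:ℝ)..1, ((derivative P * Q + P * derivative Q)).eval x
      = (∫ x in (0:ℝ)..1, (derivative P).eval x * Q.eval x)
        + ∫ x in (0:ℝ)..1, P.eval x * (derivative Q).eval x := by
    rw [← intervalIntegral.integral_add (f := fun x => (derivative P).eval x * Q.eval x)
      (g := fun x => P.eval x * (derivative Q).eval x)
      ((((derivative P).continuous).mul (Q.continuous)).intervalIntegrable 0 1)
      (((P.continuous).mul ((derivative Q).continuous)).intervalIntegrable 0 1)]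
    simp [eval_add, eval_mul]
  rw [hsplit] at key
  simp only [eval_mul, h0, h1, mul_zero] at key
  linarith

lemma shift (n : ℕ) (Q : ℝ[X]) : ∀ j ≤ n,
    ∫ x in (0:ℝ)..1, Q.eval x * (psi n).eval x
      = (-1:ℝ)^j * ∫ x in (0:ℝ)..1, (derivative^[j] Q).eval x * (derivative^[n-j] (Fp n)).eval x := by
  intro j hj
  induction j with
  | zero => simp [psi]
  | succ j ih =>
    rw [ih (by omega)]
    have he : n - j = (n - (j+1)) + 1 := by omega
    rw [he, Function.iterate_succ_apply']
    rw [ibp (derivative^[j] Q) (derivative^[n - (j+1)] (Fp n))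
      (bdry (by omega)).1 (bdry (by omega)).2]
    rw [show derivative ((⇑derivative)^[j] Q) = (⇑derivative)^[j+1] Q from
      (Function.iterate_succ_apply' _ _ _).symm]
    ring

lemma natDegree_Fp (n : ℕ) : (Fp n).natDegree = 2 * n := by
  have h1 : (X * (1 - X) : ℝ[X]).natDegree = 2 := by
    have : (X * (1 - X) : ℝ[X]) = -(X^2) + X := by ring
    rw [this]
    compute_degree!
  rw [Fp, natDegree_pow, h1]; ring

lemma natDegree_psi (n : ℕ) : (psi n).natDegree ≤ n := by
  have := Polynomial.natDegree_iterate_derivative (Fp n) n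
  rw [natDegree_Fp] at this
  simpa [psi, two_mul] using this

lemma orth {n : ℕ} (Q : ℝ[X]) (h : Q.natDegree < n) :
    ∫ x in (0:ℝ)..1, Q.eval x * (psi n).eval x = 0 := by
  rw [shift n Q n le_rfl, Polynomial.iterate_derivative_eq_zero h]
  simp

lemma leadFp (n : ℕ) : (Fp n).coeff (2 * n) = (-1:ℝ)^n := by
  have : (Fp n).coeff (2*n) = (Fp n).leadingCoeff := by
    rw [leadingCoeff, natDegree_Fp]
  rw [this, Fp, leadingCoeff_pow]
  have : (X * (1 - X) : ℝ[X]).leadingCoeff = -1 := by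
    have h : (X * (1 - X) : ℝ[X]) = -(X^2 - X) := by ring
    rw [h, leadingCoeff_neg]
    have hm : (X^2 - X : ℝ[X]).Monic := by
      apply Polynomial.monic_X_pow_sub (by simpa using Polynomial.degree_X_le)
    rw [hm.leadingCoeff]
  rw [this]

lemma iter_top (n : ℕ) : derivative^[2*n] (Fp n) = C ((-1:ℝ)^n * (2*n).factorial) := by
  ext m
  rw [Polynomial.coeff_iterate_derivative]
  rcases Nat.eq_zero_or_pos m with hm | hm
  · subst hm
    rw [Nat.zero_add, Nat.descFactorial_self, leadFp, coeff_C, if_pos rfl]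
    rw [nsmul_eq_mul]
    ring
  · have h1 : (Fp n).coeff (m + 2*n) = 0 := by
      apply coeff_eq_zero_of_natDegree_lt
      rw [natDegree_Fp]; omega
    rw [h1, coeff_C, if_neg (by omega)]
    simp

lemma intFp (n : ℕ) : ∫ x in (0:ℝ)..1, (Fp n).eval x = J n n := by
  unfold J
  apply intervalIntegral.integral_congr
  intro x _
  simp [Fp, eval_pow, mul_pow]

lemma Jnn (n : ℕ) : ((2*n).factorial : ℝ) * J n n = (n.factorial:ℝ)^2/(2*n+1) := by
  rw [J_eq]
  have h : (n + n + 1) = 2*n+1 := by ring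
  rw [h, Nat.factorial_succ]
  have h2 : (2*n+1) = 2*n + 1 := rfl
  push_cast
  have : ((2*n).factorial : ℝ) ≠ 0 := by positivity
  field_simp

lemma normPsi (n : ℕ) :
    ∫ x in (0:ℝ)..1, (psi n).eval x * (psi n).eval x = (n.factorial:ℝ)^2/(2*n+1) := by
  rw [shift n (psi n) n le_rfl]
  have h1 : derivative^[n] (psi n) = C ((-1:ℝ)^n * (2*n).factorial) := by
    rw [psi, ← Function.iterate_add_apply, ← two_mul, iter_top]
  rw [h1, Nat.sub_self]
  simp only [Function.iterate_zero_apply, eval_C]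
  rw [intervalIntegral.integral_const_mul, intFp, ← mul_assoc]
  have : (-1:ℝ)^n * ((-1:ℝ)^n * (2*n).factorial) = (2*n).factorial := by
    rw [← mul_assoc, ← pow_add, ← two_mul, pow_mul]; norm_num
  rw [this, Jnn]

lemma momInt (n m : ℕ) (h : n ≤ m) :
    ∫ x in (0:ℝ)..1, x^m * (psi n).eval x
      = (-1:ℝ)^n * (m.descFactorial n) * ((m.factorial : ℝ) * n.factorial)
          / (m+n+1).factorial := by
  have hX : ∫ x in (0:ℝ)..1, x^m * (psi n).eval x
      = ∫ x in (0:ℝ)..1, (X^m : ℝ[X]).eval x * (psi n).eval x := by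
    simp
  rw [hX, shift n (X^m) n le_rfl, Nat.sub_self]
  simp only [Function.iterate_zero_apply]
  rw [Polynomial.iterate_derivative_X_pow_eq_C_mul]
  have hcongr : ∫ x in (0:ℝ)..1, (C ((m.descFactorial n : ℝ)) * X ^ (m - n)).eval x * (Fp n).eval x
      = (m.descFactorial n : ℝ) * ∫ x in (0:ℝ)..1, x ^ m * (1-x) ^ n := by
    rw [← intervalIntegral.integral_const_mul]
    apply intervalIntegral.integral_congr
    intro x _
    simp only [eval_mul, eval_C, eval_pow, eval_X, Fp, mul_pow]
    have : x ^ (m - n) * (x ^ n * (1-x)^n) = x ^ m * (1-x)^n := by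
      rw [← mul_assoc, ← pow_add]
      congr 2
      omega
    simp only [eval_mul, eval_X, eval_one, eval_sub]
    rw [mul_assoc, this]
  rw [hcongr]
  have : (∫ x in (0:ℝ)..1, x ^ m * (1-x) ^ n) = J m n := rfl
  rw [this, J_eq]
  have h3 : (m + n + 1) = m + n + 1 := rfl
  field_simp

lemma rpow_mul_pow {s : ℝ} (hs : 0 ≤ s) (k : ℕ) {x : ℝ} (hx : 0 ≤ x) :
    x ^ s * x ^ k = x ^ (s + k) := by
  rcases eq_or_lt_of_le hx with hx0 | hx0
  · rcases Nat.eq_zero_or_pos k with hk | hk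
    · subst hk; simp
    · rw [← hx0, zero_pow (by omega), mul_zero,
        Real.zero_rpow (by
        have : (0:ℝ) < k := Nat.cast_pos.mpr hk; linarith : (0:ℝ) < s + k).ne']
  · rw [Real.rpow_add hx0, Real.rpow_natCast]

lemma rintpow {s : ℝ} (hs : 0 ≤ s) (k : ℕ) :
    ∫ x in (0:ℝ)..1, x ^ s * x ^ k = 1 / (s + k + 1) := by
  have hcongr : ∫ x in (0:ℝ)..1, x ^ s * x ^ k = ∫ x in (0:ℝ)..1, x ^ (s + k : ℝ) := by
    apply intervalIntegral.integral_congr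
    intro x hx
    rw [Set.uIcc_of_le (by norm_num)] at hx
    exact rpow_mul_pow hs k hx.1
  rw [hcongr, integral_rpow (Or.inl (by
    have := Nat.cast_nonneg (α := ℝ) k; linarith))]
  rw [Real.one_rpow, Real.zero_rpow (by
    have := Nat.cast_nonneg (α := ℝ) k; linarith : (0:ℝ) < s + k + 1).ne']
  ring

lemma momRat (n : ℕ) {s : ℝ} (hs : 0 ≤ s) :
    ∫ x in (0:ℝ)..1, x ^ s * (psi n).eval x
      = ∑ k ∈ Finset.range (n+1), (psi n).coeff k * (1 / (s + k + 1)) := by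
  have hev : ∀ x : ℝ, (psi n).eval x = ∑ k ∈ Finset.range (n+1), (psi n).coeff k * x ^ k := by
    intro x
    rw [Polynomial.eval_eq_sum_range' (Nat.lt_succ_of_le (natDegree_psi n))]
  have hcongr : ∫ x in (0:ℝ)..1, x ^ s * (psi n).eval x
      = ∫ x in (0:ℝ)..1, ∑ k ∈ Finset.range (n+1), (psi n).coeff k * (x ^ s * x ^ k) := by
    apply intervalIntegral.integral_congr
    intro x _
    show x ^ s * (psi n).eval x = _
    rw [hev x, Finset.mul_sum]
    congr 1
    ext k
    ring
  rw [hcongr, intervalIntegral.integral_finset_sum]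
  · congr 1
    ext k
    rw [intervalIntegral.integral_const_mul, rintpow hs]
  · intro k _
    apply Continuous.intervalIntegrable
    exact (continuous_const.mul ((Real.continuous_rpow_const hs).mul (continuous_pow k)))

noncomputable def den (n : ℕ) : ℝ[X] := ∏ j ∈ Finset.range (n+1), (X + C ((j:ℝ)+1))
noncomputable def num1 (n : ℕ) : ℝ[X] :=
  ∑ k ∈ Finset.range (n+1), C ((psi n).coeff k) *
    ∏ j ∈ (Finset.range (n+1)).erase k, (X + C ((j:ℝ)+1))
noncomputable def num2 (n : ℕ) : ℝ[X] :=
  C ((-1:ℝ)^n * n.factorial) * ∏ j ∈ Finset.range n, (X - C (j:ℝ))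

lemma claimA (n : ℕ) {s : ℝ} (hs : 0 ≤ s) :
    (∫ x in (0:ℝ)..1, x ^ s * (psi n).eval x) * (den n).eval s = (num1 n).eval s := by
  rw [momRat n hs, den, num1, Finset.sum_mul]
  rw [Polynomial.eval_finset_sum]
  apply Finset.sum_congr rfl
  intro k hk
  rw [Polynomial.eval_prod, Polynomial.eval_mul, Polynomial.eval_C, Polynomial.eval_prod]
  simp only [Polynomial.eval_add, Polynomial.eval_X, Polynomial.eval_C]
  rw [(Finset.mul_prod_erase _ (fun j : ℕ => s + ((j:ℝ)+1)) hk).symm]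
  have hne : s + ((k:ℝ) + 1) ≠ 0 := by
    have := Nat.cast_nonneg (α := ℝ) k; intro hc; linarith
  field_simp
  ring

lemma prod_shift (m : ℕ) : ∀ k : ℕ,
    (m.factorial : ℝ) * ∏ j ∈ Finset.range k, ((m:ℝ) + j + 1) = ((m+k).factorial : ℝ) := by
  intro k
  induction k with
  | zero => simp
  | succ k ih =>
    rw [Finset.prod_range_succ, ← mul_assoc, ih]
    have : (m + (k+1)) = (m + k) + 1 := by ring
    rw [this, Nat.factorial_succ]
    push_cast
    ring

lemma desc_prod {n m : ℕ} (h : n ≤ m) :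
    (m.descFactorial n : ℝ) = ∏ j ∈ Finset.range n, ((m:ℝ) - j) := by
  induction n with
  | zero => simp
  | succ n ih =>
    rw [Finset.prod_range_succ, ← ih (by omega), Nat.descFactorial_succ]
    have : ((m - n : ℕ) : ℝ) = (m:ℝ) - n := by
      have : n ≤ m := by omega
      push_cast [this]
      ring
    push_cast [this]
    ring

lemma claimB (n m : ℕ) (h : n ≤ m) : (num1 n).eval (m:ℝ) = (num2 n).eval (m:ℝ) := by
  have hA := claimA n (s := (m:ℝ)) (Nat.cast_nonneg m)
  have hpow : ∫ x in (0:ℝ)..1, x ^ ((m:ℝ)) * (psi n).eval x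
      = ∫ x in (0:ℝ)..1, x ^ m * (psi n).eval x := by
    apply intervalIntegral.integral_congr
    intro x _
    show x ^ ((m:ℝ)) * (psi n).eval x = x ^ m * (psi n).eval x
    rw [Real.rpow_natCast]
  rw [hpow, momInt n m h] at hA
  rw [← hA, num2, Polynomial.eval_mul, Polynomial.eval_C, Polynomial.eval_prod]
  simp only [Polynomial.eval_sub, Polynomial.eval_X, Polynomial.eval_C]
  rw [← desc_prod h]
  have hden : (den n).eval (m:ℝ) = ∏ j ∈ Finset.range (n+1), ((m:ℝ) + j + 1) := by
    rw [den, Polynomial.eval_prod]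
    apply Finset.prod_congr rfl
    intro j _
    simp; ring
  rw [hden]
  have hps := prod_shift m (n+1)
  have hmn : (m + (n+1)) = m + n + 1 := by ring
  rw [hmn] at hps
  have h1 : ((m+n+1).factorial : ℝ) ≠ 0 := by positivity
  have h2 : ((m+n+1).factorial : ℝ) = (m.factorial : ℝ) * ∏ j ∈ Finset.range (n+1), ((m:ℝ) + j + 1) := hps.symm
  rw [h2]
  have hm0 : (m.factorial : ℝ) ≠ 0 := by positivity
  field_simp

lemma num_eq (n : ℕ) : num1 n = num2 n := by
  apply Polynomial.eq_of_infinite_eval_eq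
  apply Set.Infinite.mono (s := (fun m : ℕ => (m:ℝ)) '' (Set.Ici n))
  · rintro x ⟨m, hm, rfl⟩
    exact claimB n m hm
  · exact (Set.Ici_infinite n).image (fun a _ b _ h => Nat.cast_injective h)

noncomputable def A (n : ℕ) : ℝ := ∫ x in (0:ℝ)..1, Real.sqrt x * (psi n).eval x
noncomputable def Dh (n : ℕ) : ℝ := ∏ j ∈ Finset.range (n+1), ((1:ℝ)/2 + (j + 1))
noncomputable def U (n : ℕ) : ℝ := ∏ j ∈ Finset.range n, ((1:ℝ)/2 - j)

lemma Dh_pos (n : ℕ) : 0 < Dh n := by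
  apply Finset.prod_pos
  intro j _
  positivity

lemma A_mul_Dh (n : ℕ) : A n * Dh n = (-1:ℝ)^n * n.factorial * U n := by
  have h2 : A n = ∫ x in (0:ℝ)..1, x ^ ((1:ℝ)/2) * (psi n).eval x := by
    rw [A]
    apply intervalIntegral.integral_congr
    intro x _
    show Real.sqrt x * (psi n).eval x = x ^ ((1:ℝ)/2) * (psi n).eval x
    rw [Real.sqrt_eq_rpow]
  have hA := claimA n (s := (1:ℝ)/2) (by norm_num)
  rw [← h2] at hA
  have hden : (den n).eval ((1:ℝ)/2) = Dh n := by
    rw [den, Polynomial.eval_prod, Dh]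
    apply Finset.prod_congr rfl
    intro j _
    simp
  have hnum : (num1 n).eval ((1:ℝ)/2) = (-1:ℝ)^n * n.factorial * U n := by
    rw [num_eq, num2, Polynomial.eval_mul, Polynomial.eval_C, Polynomial.eval_prod, U]
    congr 1
    apply Finset.prod_congr rfl
    intro j _
    simp
  rw [hden, hnum] at hA
  exact hA

lemma claimR : ∀ n : ℕ, 1 ≤ n →
    (U n)^2 * ((2*(n:ℝ)-1) * (2*n+1) * (2*n+3))^2 = 4 * (Dh n)^2 := by
  intro n hn
  induction n, hn using Nat.le_induction with
  | base =>
    rw [U, Dh]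
    simp [Finset.prod_range_succ]
    norm_num
  | succ n hn ih =>
    have hU : U (n+1) = U n * ((1:ℝ)/2 - n) := by
      simp only [U]; rw [Finset.prod_range_succ]
    have hD : Dh (n+1) = Dh n * ((1:ℝ)/2 + (n + 1 + 1)) := by
      simp only [Dh]; rw [Finset.prod_range_succ]; push_cast; ring
    have h1 : (2*(n:ℝ)-1) ≠ 0 := by
      have : (1:ℝ) ≤ n := by exact_mod_cast hn
      intro hc; linarith
    rw [hU, hD]
    push_cast
    have expand : (U n * ((1:ℝ)/2 - n))^2 * (2*(n:ℝ)+1) ^ 2 * ((2*n+3))^2 * ((2*n+5))^2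
        * (2*(n:ℝ)-1)^2
        = ((U n)^2 * ((2*(n:ℝ)-1) * (2*n+1) * (2*n+3))^2) * (((1:ℝ)/2 - n)^2 * (2*n+5)^2) := by
      ring
    have goal2 : (U n * ((1:ℝ)/2 - n))^2 * ((2*(↑n+1)-1) * (2*(↑n+1)+1) * (2*(↑n+1)+3))^2
        = 4 * (Dh n * ((1:ℝ)/2 + (↑n + 1 + 1)))^2 := by
      have e1 : (2*((n:ℝ)+1)-1) = 2*(n:ℝ)+1 := by ring
      have e2 : (2*((n:ℝ)+1)+1) = 2*(n:ℝ)+3 := by ring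
      have e3 : (2*((n:ℝ)+1)+3) = 2*(n:ℝ)+5 := by ring
      rw [e1, e2, e3]
      have key : ((U n)^2 * ((2*(n:ℝ)-1) * (2*n+1) * (2*n+3))^2) * (((1:ℝ)/2 - n)^2 * (2*n+5)^2)
          = (4 * (Dh n)^2) * (((1:ℝ)/2 - n)^2 * (2*n+5)^2) := by rw [ih]
      have h4 : ((1:ℝ)/2 - n)^2 = ((2*(n:ℝ)-1)/2)^2 := by ring
      nlinarith [sq_nonneg (2*(n:ℝ)-1), ih]
    exact goal2

lemma A_sq {n : ℕ} (hn : 1 ≤ n) :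
    (A n)^2 * ((2*(n:ℝ)-1) * (2*n+1) * (2*n+3))^2 = 4 * (n.factorial:ℝ)^2 := by
  have h1 := A_mul_Dh n
  have h2 := claimR n hn
  have h3 : (A n * Dh n)^2 = ((-1:ℝ)^n * n.factorial * U n)^2 := by rw [h1]
  have h4 : (A n)^2 * (Dh n)^2 = (n.factorial:ℝ)^2 * (U n)^2 := by
    have : ((-1:ℝ)^n)^2 = 1 := by
      rw [← pow_mul, mul_comm, pow_mul]; norm_num
    nlinarith [h3, this]
  have hD := Dh_pos n
  have h5 : (A n)^2 * (Dh n)^2 * ((2*(n:ℝ)-1) * (2*n+1) * (2*n+3))^2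
      = (n.factorial:ℝ)^2 * (4 * (Dh n)^2) := by
    rw [← h2]; nlinarith [h4]
  have hD2 : (0:ℝ) < (Dh n)^2 := by positivity
  nlinarith [h5, hD2]

lemma bessel (p : ℕ) (P : ℝ[X]) (hP : P.natDegree ≤ p) :
    ∑ n ∈ Finset.Icc (p+1) (2*p), (A n)^2 / ((n.factorial:ℝ)^2/(2*n+1))
      ≤ ∫ x in (0:ℝ)..1, (Real.sqrt x - P.eval x)^2 := by
  set S := Finset.Icc (p+1) (2*p) with hS
  set N : ℕ → ℝ := fun n => (n.factorial:ℝ)^2/(2*n+1) with hN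
  have hNpos : ∀ n : ℕ, 0 < N n := by
    intro n
    apply div_pos (by positivity) (by positivity)
  set e : ℝ → ℝ := fun x => Real.sqrt x - P.eval x with he
  have hce : Continuous e := Real.continuous_sqrt.sub P.continuous
  set c : ℕ → ℝ := fun n => A n / N n with hc
  set g : ℝ → ℝ := fun x => ∑ n ∈ S, c n * (psi n).eval x with hg
  have hcg : Continuous g := by
    apply continuous_finset_sum
    intro n _
    exact continuous_const.mul (psi n).continuous
  -- orthogonality of distinct psi
  have orthNE : ∀ m n : ℕ, m ≠ n →
      ∫ x in (0:ℝ)..1, (psi m).eval x * (psi n).eval x = 0 := by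
    intro m n hmn
    rcases lt_or_gt_of_ne hmn with h | h
    · exact orth (psi m) (lt_of_le_of_lt (natDegree_psi m) h)
    · have := orth (psi n) (lt_of_le_of_lt (natDegree_psi n) h)
      refine Eq.trans ?_ this
      apply intervalIntegral.integral_congr
      intro x _
      exact mul_comm _ _
  -- e against psi n, n ∈ S
  have hEA : ∀ n ∈ S, ∫ x in (0:ℝ)..1, e x * (psi n).eval x = A n := by
    intro n hn
    have hn1 : p + 1 ≤ n := (Finset.mem_Icc.mp hn).1
    have hsplit : ∫ x in (0:ℝ)..1, e x * (psi n).eval x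
        = (∫ x in (0:ℝ)..1, Real.sqrt x * (psi n).eval x)
          - ∫ x in (0:ℝ)..1, P.eval x * (psi n).eval x := by
      rw [← intervalIntegral.integral_sub (f := fun x => Real.sqrt x * (psi n).eval x)
        (g := fun x => P.eval x * (psi n).eval x)
        ((Real.continuous_sqrt.mul (psi n).continuous).intervalIntegrable 0 1)
        ((P.continuous.mul (psi n).continuous).intervalIntegrable 0 1)]
      apply intervalIntegral.integral_congr
      intro x _
      show e x * (psi n).eval x = _
      rw [he]; ring
    rw [hsplit, orth P (by omega : P.natDegree < n)]
    rw [← A]; ring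
  -- ∫ e g
  have hEG : ∫ x in (0:ℝ)..1, e x * g x = ∑ n ∈ S, (A n)^2 / N n := by
    have h1 : ∫ x in (0:ℝ)..1, e x * g x
        = ∑ n ∈ S, ∫ x in (0:ℝ)..1, c n * (e x * (psi n).eval x) := by
      rw [← intervalIntegral.integral_finset_sum]
      · apply intervalIntegral.integral_congr
        intro x _
        show e x * g x = _
        rw [hg]
        simp only [Finset.mul_sum]
        apply Finset.sum_congr rfl
        intro n _
        ring
      · intro n _
        exact (continuous_const.mul (hce.mul (psi n).continuous)).intervalIntegrable 0 1
    rw [h1]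
    apply Finset.sum_congr rfl
    intro n hn
    rw [intervalIntegral.integral_const_mul, hEA n hn, hc]
    field_simp
  -- ∫ g g
  have hGG : ∫ x in (0:ℝ)..1, g x * g x = ∑ n ∈ S, (A n)^2 / N n := by
    have h1 : ∫ x in (0:ℝ)..1, g x * g x
        = ∑ n ∈ S, ∑ m ∈ S, (c n * c m) * ∫ x in (0:ℝ)..1, (psi n).eval x * (psi m).eval x := by
      have h2 : ∫ x in (0:ℝ)..1, g x * g x
          = ∑ n ∈ S, ∫ x in (0:ℝ)..1, ∑ m ∈ S, (c n * c m) * ((psi n).eval x * (psi m).eval x) := by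
        rw [← intervalIntegral.integral_finset_sum]
        · apply intervalIntegral.integral_congr
          intro x _
          show g x * g x = _
          rw [hg, Finset.sum_mul_sum]
          apply Finset.sum_congr rfl
          intro n _
          apply Finset.sum_congr rfl
          intro m _
          ring
        · intro n _
          apply Continuous.intervalIntegrable
          apply continuous_finset_sum
          intro m _
          exact continuous_const.mul ((psi n).continuous.mul (psi m).continuous)
      rw [h2]
      apply Finset.sum_congr rfl
      intro n _
      rw [intervalIntegral.integral_finset_sum]
      · apply Finset.sum_congr rfl
        intro m _
        rw [intervalIntegral.integral_const_mul]
      · intro m _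
        exact (continuous_const.mul ((psi n).continuous.mul (psi m).continuous)).intervalIntegrable 0 1
    rw [h1]
    apply Finset.sum_congr rfl
    intro n hn
    rw [Finset.sum_eq_single_of_mem n hn]
    · rw [normPsi n]
      rw [hc, hN]
      have hNe : ((n.factorial:ℝ)^2/(2*(n:ℝ)+1)) ≠ 0 := by
        apply ne_of_gt
        apply div_pos (by positivity) (by positivity)
      field_simp
    · intro m _ hm
      rw [orthNE n m (Ne.symm hm), mul_zero]
  -- nonnegativity of ∫ (e-g)^2
  have hnn : 0 ≤ ∫ x in (0:ℝ)..1, (e x - g x)^2 :=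
    intervalIntegral.integral_nonneg (by norm_num) (fun x _ => sq_nonneg _)
  have hexp : ∫ x in (0:ℝ)..1, (e x - g x)^2
      = (∫ x in (0:ℝ)..1, (e x)^2) - 2 * (∫ x in (0:ℝ)..1, e x * g x)
        + ∫ x in (0:ℝ)..1, g x * g x := by
    have hi1 : IntervalIntegrable (fun x => (e x)^2) volume 0 1 :=
      (hce.pow 2).intervalIntegrable 0 1
    have hi2 : IntervalIntegrable (fun x => e x * g x) volume 0 1 :=
      (hce.mul hcg).intervalIntegrable 0 1
    have hi3 : IntervalIntegrable (fun x => g x * g x) volume 0 1 :=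
      (hcg.mul hcg).intervalIntegrable 0 1
    have step : ∫ x in (0:ℝ)..1, (e x - g x)^2
        = ∫ x in (0:ℝ)..1, ((e x)^2 - 2 * (e x * g x) + g x * g x) := by
      apply intervalIntegral.integral_congr
      intro x _
      show (e x - g x)^2 = _
      ring
    rw [step, intervalIntegral.integral_add (hi1.sub (hi2.const_mul 2)) hi3,
        intervalIntegral.integral_sub hi1 (hi2.const_mul 2),
        intervalIntegral.integral_const_mul]
  rw [hexp, hEG, hGG] at hnn
  have final : ∑ n ∈ S, (A n)^2 / N n ≤ ∫ x in (0:ℝ)..1, (e x)^2 := by linarith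
  exact final

lemma term_bound (p n : ℕ) (hp : 1 ≤ p) (hn1 : p+1 ≤ n) (hn2 : n ≤ 2*p) :
    1/(2450 * (p:ℝ)^5) ≤ (A n)^2 / ((n.factorial:ℝ)^2/(2*(n:ℝ)+1)) := by
  have hq : (1:ℝ) ≤ p := by exact_mod_cast hp
  have hnq : (p:ℝ) + 1 ≤ n := by exact_mod_cast hn1
  have hn2q : (n:ℝ) ≤ 2*p := by exact_mod_cast hn2
  set nn : ℝ := (n:ℝ) with hnn
  set q : ℝ := (p:ℝ) with hqd
  have hnn2 : (2:ℝ) ≤ nn := by linarith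
  have hx1 : (0:ℝ) < 2*nn-1 := by linarith
  have hx2 : (0:ℝ) < 2*nn+1 := by linarith
  have hx3 : (0:ℝ) < 2*nn+3 := by linarith
  set x : ℝ := (2*nn-1) * (2*nn+1) * (2*nn+3) with hxd
  have hxpos : 0 < x := by positivity
  have hF : (0:ℝ) < (n.factorial:ℝ) := by positivity
  have hAx := A_sq (n := n) (by omega)
  have hA2 : (A n)^2 = 4*(n.factorial:ℝ)^2/x^2 := by
    rw [eq_div_iff (by positivity)]
    rw [← hAx]
  have hred : (A n)^2 / ((n.factorial:ℝ)^2/(2*nn+1)) = 4*(2*nn+1)/x^2 := by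
    rw [hA2]
    field_simp
  rw [hred]
  rw [div_le_div_iff₀ (by positivity) (by positivity)]
  have hb1 : 2*nn-1 ≤ 4*q := by linarith
  have hb2 : 2*nn+1 ≤ 5*q := by linarith
  have hb3 : 2*nn+3 ≤ 7*q := by linarith
  have hq0 : (0:ℝ) < q := by linarith
  have hx140 : x ≤ 140*q^3 := by
    rw [hxd]
    calc (2*nn-1) * (2*nn+1) * (2*nn+3) ≤ (4*q) * (5*q) * (7*q) := by
          apply mul_le_mul _ hb3 (le_of_lt hx3) (by positivity)
          apply mul_le_mul hb1 hb2 (le_of_lt hx2) (by positivity)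
      _ = 140*q^3 := by ring
  have hxsq : x^2 ≤ 19600*q^6 := by nlinarith [hxpos, hx140]
  have hrhs : 19600*q^6 ≤ 4*(2*nn+1) * (2450*q^5) := by nlinarith [hq0, hnq, hq]
  linarith [hxsq, hrhs]

/-- The best `L²([0,1])` polynomial approximation error of `r ↦ √r` decays no
faster than `p⁻²`. -/
theorem sqrt_poly_approx_lower_bound :
    ∃ c : ℝ, 0 < c ∧ ∀ p : ℕ, 1 ≤ p → ∀ P : Polynomial ℝ, P.degree ≤ (p : ℕ) →
      c * ((p : ℝ) ^ (2:ℕ))⁻¹ ≤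
        (∫ r in (0:ℝ)..1, (Real.sqrt r - P.eval r) ^ 2) ^ ((1:ℝ)/2) := by
  refine ⟨1/50, by norm_num, ?_⟩
  intro p hp P hdeg
  have hnd : P.natDegree ≤ p := Polynomial.natDegree_le_iff_degree_le.mpr hdeg
  have hB := bessel p P hnd
  have hcard : (Finset.Icc (p+1) (2*p)).card = p := by
    rw [Nat.card_Icc]; omega
  have hsum : (p:ℝ) * (1/(2450 * (p:ℝ)^5))
      ≤ ∑ n ∈ Finset.Icc (p+1) (2*p), (A n)^2 / ((n.factorial:ℝ)^2/(2*(n:ℝ)+1)) := by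
    have := Finset.card_nsmul_le_sum (Finset.Icc (p+1) (2*p))
      (fun n => (A n)^2 / ((n.factorial:ℝ)^2/(2*(n:ℝ)+1))) (1/(2450 * (p:ℝ)^5))
      (fun n hn => term_bound p n hp (Finset.mem_Icc.mp hn).1 (Finset.mem_Icc.mp hn).2)
    rw [hcard] at this
    simpa [nsmul_eq_mul] using this
  have hq : (1:ℝ) ≤ p := by exact_mod_cast hp
  have hq0 : (0:ℝ) < p := by linarith
  have hI : 1/(2450 * (p:ℝ)^4) ≤ ∫ r in (0:ℝ)..1, (Real.sqrt r - P.eval r) ^ 2 := by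
    have h1 : (p:ℝ) * (1/(2450 * (p:ℝ)^5)) = 1/(2450 * (p:ℝ)^4) := by
      field_simp
    calc 1/(2450 * (p:ℝ)^4) = (p:ℝ) * (1/(2450 * (p:ℝ)^5)) := h1.symm
      _ ≤ _ := le_trans hsum hB
  have hb : (0:ℝ) ≤ 1/50 * (((p:ℝ)^(2:ℕ))⁻¹) := by positivity
  have hbsq : (1/50 * (((p:ℝ)^(2:ℕ))⁻¹))^2 ≤ ∫ r in (0:ℝ)..1, (Real.sqrt r - P.eval r) ^ 2 := by
    have h2 : (1/50 * (((p:ℝ)^(2:ℕ))⁻¹))^2 = 1/(2500 * (p:ℝ)^4) := by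
      field_simp
      ring
    rw [h2]
    have h3 : 1/(2500 * (p:ℝ)^4) ≤ 1/(2450 * (p:ℝ)^4) := by
      apply one_div_le_one_div_of_le (by positivity)
      nlinarith [hq0]
    linarith
  have hsqrt := Real.sqrt_le_sqrt hbsq
  rw [Real.sqrt_sq hb] at hsqrt
  rw [← Real.sqrt_eq_rpow]
  exact hsqrt
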